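/- For m ≡ 0 (mod 4), m > 8, the m-gonal form P_m(x_1)+P_m(x_2)+P_m(x_3)+P_m(x_4) is locally universal (represents every positive integer over every ℤ_p) but is not almost universal: infinitely many positive integers are not represented over ℤ. -/

import Mathlib

/-- The `x`-th generalized `m`-gonal number. -/
def polyP (m x : ℤ) : ℤ := (m - 2) * (x ^ 2 - x) / 2 + x


open Polynomial in
/-- Hensel for odd p with unit derivative. -/
lemma henselOdd (p : ℕ) [Fact p.Prime] (A B M x₀ : ℤ)
    (h1 : (p:ℤ) ∣ (A*x₀^2 + B*x₀ - M))
    (h2 : ¬ (p:ℤ) ∣ (2*A*x₀ + B)) :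
    ∃ z : ℤ_[p], (A:ℤ_[p]) * z^2 + (B:ℤ_[p]) * z = (M:ℤ_[p]) := by
  set F : Polynomial ℤ_[p] := C (A:ℤ_[p]) * X^2 + C (B:ℤ_[p]) * X - C (M:ℤ_[p]) with hF
  have hev : F.eval ((x₀:ℤ_[p])) = ((A*x₀^2 + B*x₀ - M : ℤ) : ℤ_[p]) := by
    simp [hF]
  have hev' : F.derivative.eval ((x₀:ℤ_[p])) = ((2*A*x₀ + B : ℤ) : ℤ_[p]) := by
    simp [hF]; push_cast; ring
  have hn1 : ‖F.eval ((x₀:ℤ_[p]))‖ < 1 := by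
    rw [hev]; exact (PadicInt.norm_int_lt_one_iff_dvd _).2 h1
  have hn2 : ‖F.derivative.eval ((x₀:ℤ_[p]))‖ = 1 := by
    rw [hev']
    have hle := PadicInt.norm_le_one ((2*A*x₀ + B : ℤ) : ℤ_[p])
    have : ¬ ‖((2*A*x₀ + B : ℤ) : ℤ_[p])‖ < 1 := by
      rw [PadicInt.norm_int_lt_one_iff_dvd]; exact h2
    linarith [lt_or_ge (‖((2*A*x₀ + B : ℤ) : ℤ_[p])‖) 1]
  have hyp : ‖F.eval ((x₀:ℤ_[p]))‖ < ‖F.derivative.eval ((x₀:ℤ_[p]))‖^2 := by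
    rw [hn2]; simpa using hn1
  obtain ⟨z, hz, -⟩ := hensels_lemma hyp
  refine ⟨z, ?_⟩
  have : F.eval z = (A:ℤ_[p]) * z^2 + (B:ℤ_[p]) * z - (M:ℤ_[p]) := by simp [hF]
  rw [Polynomial.coe_aeval_eq_eval, this] at hz; exact sub_eq_zero.mp hz

open Polynomial in
lemma sq2adic (t : ℤ) (ht : t % 8 = 1) : ∃ y : ℤ_[2], y^2 = (t : ℤ_[2]) := by
  haveI : Fact (Nat.Prime 2) := ⟨Nat.prime_two⟩
  set F : Polynomial ℤ_[2] := X^2 - C (t:ℤ_[2]) with hF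
  have hev : F.eval 1 = ((1 - t : ℤ) : ℤ_[2]) := by simp [hF]
  have hev' : F.derivative.eval 1 = ((2:ℤ) : ℤ_[2]) := by simp [hF]; norm_num
  have hn1 : ‖F.eval 1‖ ≤ ((2:ℝ))^(-(3:ℕ):ℤ) := by
    rw [hev]
    have : ((2:ℕ):ℝ) = (2:ℝ) := by norm_num
    rw [← this]
    exact PadicInt.norm_int_le_pow_iff_dvd.2 (by omega)
  have hn2 : ‖F.derivative.eval 1‖ = (2:ℝ)⁻¹ := by
    rw [hev']
    have : ((2:ℤ) : ℤ_[2]) = ((2:ℕ) : ℤ_[2]) := by norm_num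
    rw [this]
    simpa using PadicInt.norm_p (p := 2)
  have hyp : ‖F.eval 1‖ < ‖F.derivative.eval 1‖^2 := by
    rw [hn2]
    calc ‖F.eval 1‖ ≤ ((2:ℝ))^(-(3:ℕ):ℤ) := hn1
    _ < ((2:ℝ)⁻¹)^2 := by norm_num
  obtain ⟨z, hz, -⟩ := hensels_lemma hyp
  refine ⟨z, ?_⟩
  have : F.eval z = z^2 - (t:ℤ_[2]) := by simp [hF]
  rw [Polynomial.coe_aeval_eq_eval, this] at hz
  exact sub_eq_zero.mp hz

lemma fourSq2aux : ∀ n : ℕ, ∀ M : ℤ, 0 < M → M ≤ 4^n →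
    ∃ z : Fin 4 → ℤ_[2], (z 0)^2 + (z 1)^2 + (z 2)^2 + (z 3)^2 = (M : ℤ_[2]) := by
  intro n
  induction n with
  | zero =>
    intro M h1 h2
    have : M = 1 := by omega
    subst this
    refine ⟨![1,0,0,0], ?_⟩
    show (1:ℤ_[2])^2 + 0^2 + 0^2 + 0^2 = ((1:ℤ):ℤ_[2])
    norm_num
  | succ n ih =>
    intro M h1 h2
    by_cases h4 : (4:ℤ) ∣ M
    · obtain ⟨M', rfl⟩ := h4
      obtain ⟨z, hz⟩ := ih M' (by omega) (by
        have : (0:ℤ) < 4^n := by positivity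
        nlinarith [pow_succ (4:ℤ) n])
      refine ⟨fun i => 2 * z i, ?_⟩
      have hc : ((4*M' : ℤ) : ℤ_[2]) = 4 * ((M':ℤ):ℤ_[2]) := by push_cast; ring
      rw [hc]
      linear_combination (4:ℤ_[2]) * hz
    · set s : ℤ := (M - 1) % 8 with hs
      have hsr : s = 0 ∨ s = 1 ∨ s = 2 ∨ s = 3 ∨ s = 4 ∨ s = 5 ∨ s = 6 := by omega
      have ht : (M - s) % 8 = 1 := by omega
      obtain ⟨y, hy⟩ := sq2adic (M - s) ht
      have key : ∀ b c d : ℤ, b^2 + c^2 + d^2 = s →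
          ∃ z : Fin 4 → ℤ_[2], (z 0)^2 + (z 1)^2 + (z 2)^2 + (z 3)^2 = (M : ℤ_[2]) := by
        intro b c d hbcd
        refine ⟨![y, (b:ℤ_[2]), (c:ℤ_[2]), (d:ℤ_[2])], ?_⟩
        show y^2 + ((b:ℤ):ℤ_[2])^2 + ((c:ℤ):ℤ_[2])^2 + ((d:ℤ):ℤ_[2])^2 = ((M:ℤ):ℤ_[2])
        rw [hy]
        have hc : ((b:ℤ):ℤ_[2])^2 + ((c:ℤ):ℤ_[2])^2 + ((d:ℤ):ℤ_[2])^2 = ((s:ℤ):ℤ_[2]) := by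
          rw [← hbcd]; push_cast; ring
        have hc2 : ((M - s : ℤ) : ℤ_[2]) = ((M:ℤ):ℤ_[2]) - ((s:ℤ):ℤ_[2]) := by push_cast; ring
        rw [hc2]
        linear_combination hc
      rcases hsr with h|h|h|h|h|h|h
      · exact key 0 0 0 (by rw [h]; ring)
      · exact key 1 0 0 (by rw [h]; ring)
      · exact key 1 1 0 (by rw [h]; ring)
      · exact key 1 1 1 (by rw [h]; ring)
      · exact key 2 0 0 (by rw [h]; ring)
      · exact key 2 1 0 (by rw [h]; ring)
      · exact key 2 1 1 (by rw [h]; ring)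

lemma fourSq2 (M : ℤ) (h : 0 < M) :
    ∃ z : Fin 4 → ℤ_[2], (z 0)^2 + (z 1)^2 + (z 2)^2 + (z 3)^2 = (M : ℤ_[2]) := by
  obtain ⟨n, hn⟩ : ∃ n : ℕ, M ≤ 4^n := by
    refine ⟨M.toNat, ?_⟩
    calc M = (M.toNat : ℤ) := by omega
    _ ≤ 4^M.toNat := by exact_mod_cast (Nat.lt_pow_self (n := M.toNat) (by norm_num : 1 < 4)).le
  exact fourSq2aux n M h hn

lemma zmodSolve (p : ℕ) [Fact p.Prime] (hp : p ≠ 2) (α ν : ZMod p) :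
    ∃ ξ₀ ξ₁ ξ₂ ξ₃ : ZMod p,
      (α*ξ₀^2 + (1-α)*ξ₀) + (α*ξ₁^2 + (1-α)*ξ₁) + (α*ξ₂^2 + (1-α)*ξ₂)
        + (α*ξ₃^2 + (1-α)*ξ₃) = ν ∧ 2*α*ξ₀ + (1-α) ≠ 0 := by
  by_cases hα : α = 0
  · exact ⟨ν, 0, 0, 0, by subst hα; ring, by subst hα; simp⟩
  · have h2 : (2 : ZMod p) ≠ 0 := by
      intro h
      have h' : ((2:ℕ) : ZMod p) = 0 := by exact_mod_cast h
      have hd := (ZMod.natCast_eq_zero_iff 2 p).1 h'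
      exact hp ((Nat.prime_dvd_prime_iff_eq (Fact.out) Nat.prime_two).1 hd)
    have h2α : 2*α ≠ 0 := mul_ne_zero h2 hα
    set β : ZMod p := (1 - α) * (2*α)⁻¹ with hβdef
    have hβ : 2*α*β = 1 - α := by
      rw [hβdef]; field_simp
    set γ : ZMod p := α⁻¹ * ν + 4*β^2 with hγdef
    have hαγ : α * γ = ν + 4*α*β^2 := by
      rw [hγdef]; field_simp
    have hrep : ∃ u v w t : ZMod p, u ≠ 0 ∧ u^2 + v^2 + w^2 + t^2 = γ := by
      by_cases hγ : γ = 0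
      · obtain ⟨u, v, huv⟩ := ZMod.sq_add_sq p (-1)
        exact ⟨1, u, v, 0, one_ne_zero, by rw [hγ]; linear_combination huv⟩
      · obtain ⟨u, v, huv⟩ := ZMod.sq_add_sq p γ
        by_cases hu : u = 0
        · refine ⟨v, u, 0, 0, ?_, by linear_combination huv⟩
          intro hv; apply hγ; rw [← huv, hu, hv]; ring
        · exact ⟨u, v, 0, 0, hu, by linear_combination huv⟩
    obtain ⟨u, v, w, t, hu, hsum⟩ := hrep
    refine ⟨u - β, v - β, w - β, t - β, ?_, ?_⟩
    · linear_combination α * hsum + hαγ + (4*β - (u + v + w + t)) * hβ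
    · have : 2*α*(u-β) + (1-α) = 2*α*u := by linear_combination -hβ
      rw [this]
      exact mul_ne_zero h2α hu

lemma localUniv (b : ℤ) (hb : 2 ≤ b) (N : ℤ) (hN : 0 < N)
    (p : ℕ) [hp : Fact p.Prime] :
    ∃ x : Fin 4 → ℤ_[p],
      2 * (N : ℤ_[p]) =
        ∑ i, ((((2*(2*b+1)+2 : ℤ) : ℤ_[p]) - 2) * ((x i) ^ 2 - x i) + 2 * x i) := by
  set a : ℤ := 2*b+1 with ha
  by_cases hp2 : p = 2
  · subst hp2
    set M : ℤ := a*N + 4*b^2 with hM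
    have hMpos : 0 < M := by nlinarith
    obtain ⟨z, hz⟩ := fourSq2 M hMpos
    have hunit : IsUnit ((a:ℤ) : ℤ_[2]) := by
      rw [PadicInt.isUnit_iff]
      have hle := PadicInt.norm_le_one ((a:ℤ) : ℤ_[2])
      have hnd : ¬ ((2:ℕ):ℤ) ∣ a := by omega
      have := (PadicInt.norm_int_lt_one_iff_dvd (p := 2) a).not.2 hnd
      linarith [lt_or_ge (‖((a:ℤ) : ℤ_[2])‖) 1]
    obtain ⟨c, hc⟩ := isUnit_iff_exists_inv.1 hunit
    set x : Fin 4 → ℤ_[2] := fun i => c * (z i + (b:ℤ_[2])) with hx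
    have hax : ∀ i, ((a:ℤ):ℤ_[2]) * x i - (b:ℤ_[2]) - z i = 0 := by
      intro i
      simp only [hx]
      linear_combination (z i + (b:ℤ_[2])) * hc
    refine ⟨x, hunit.mul_left_cancel ?_⟩
    rw [Fin.sum_univ_four]
    have hz' : (z 0)^2 + (z 1)^2 + (z 2)^2 + (z 3)^2
        = ((a:ℤ):ℤ_[2]) * (N:ℤ_[2]) + 4*((b:ℤ):ℤ_[2])^2 := by
      rw [hz, hM]; push_cast; ring
    have hcast : ((2*(2*b+1)+2 : ℤ) : ℤ_[2]) = 2*((a:ℤ):ℤ_[2]) + 2 := by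
      rw [ha]; push_cast; ring
    rw [hcast]
    have hab : ((a:ℤ):ℤ_[2]) = 2*((b:ℤ):ℤ_[2]) + 1 := by rw [ha]; push_cast; ring
    rw [hab] at hax hz' ⊢
    linear_combination (-2:ℤ_[2])*hz'
      - 2*((2*((b:ℤ):ℤ_[2])+1) * x 0 - ((b:ℤ):ℤ_[2]) + z 0) * hax 0
      - 2*((2*((b:ℤ):ℤ_[2])+1) * x 1 - ((b:ℤ):ℤ_[2]) + z 1) * hax 1
      - 2*((2*((b:ℤ):ℤ_[2])+1) * x 2 - ((b:ℤ):ℤ_[2]) + z 2) * hax 2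
      - 2*((2*((b:ℤ):ℤ_[2])+1) * x 3 - ((b:ℤ):ℤ_[2]) + z 3) * hax 3
  · obtain ⟨ξ₀, ξ₁, ξ₂, ξ₃, hsum, hder⟩ := zmodSolve p hp2 ((a:ℤ) : ZMod p) ((N:ℤ) : ZMod p)
    set x₂ : ℤ := (ξ₁.val : ℤ) with hx2
    set x₃ : ℤ := (ξ₂.val : ℤ) with hx3
    set x₄ : ℤ := (ξ₃.val : ℤ) with hx4
    set x₀ : ℤ := (ξ₀.val : ℤ) with hx0
    set M' : ℤ := N - (a*x₂^2 + (1-a)*x₂) - (a*x₃^2 + (1-a)*x₃) - (a*x₄^2 + (1-a)*x₄) with hM'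
    have hcastval : ∀ ξ : ZMod p, (((ξ.val : ℤ)) : ZMod p) = ξ := by
      intro ξ
      push_cast
      simp [ZMod.natCast_val, ZMod.cast_id]
    have hdvd1 : (p:ℤ) ∣ (a*x₀^2 + (1-a)*x₀ - M') := by
      rw [← ZMod.intCast_zmod_eq_zero_iff_dvd]
      push_cast [hM', hx0, hx2, hx3, hx4]
      simp only [ZMod.natCast_val, ZMod.cast_id]
      linear_combination hsum
    have hdvd2 : ¬ (p:ℤ) ∣ (2*a*x₀ + (1-a)) := by
      rw [← ZMod.intCast_zmod_eq_zero_iff_dvd]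
      push_cast [hx0]
      simp only [ZMod.natCast_val, ZMod.cast_id]
      exact hder
    obtain ⟨z, hzeq⟩ := henselOdd p a (1-a) M' x₀ hdvd1 hdvd2
    refine ⟨![z, (x₂:ℤ_[p]), (x₃:ℤ_[p]), (x₄:ℤ_[p])], ?_⟩
    rw [Fin.sum_univ_four]
    show 2 * (N : ℤ_[p]) =
      (((2*(2*b+1)+2 : ℤ) : ℤ_[p]) - 2) * (z^2 - z) + 2*z
      + ((((2*(2*b+1)+2 : ℤ) : ℤ_[p]) - 2) * (((x₂:ℤ):ℤ_[p])^2 - ((x₂:ℤ):ℤ_[p])) + 2*((x₂:ℤ):ℤ_[p]))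
      + ((((2*(2*b+1)+2 : ℤ) : ℤ_[p]) - 2) * (((x₃:ℤ):ℤ_[p])^2 - ((x₃:ℤ):ℤ_[p])) + 2*((x₃:ℤ):ℤ_[p]))
      + ((((2*(2*b+1)+2 : ℤ) : ℤ_[p]) - 2) * (((x₄:ℤ):ℤ_[p])^2 - ((x₄:ℤ):ℤ_[p])) + 2*((x₄:ℤ):ℤ_[p]))
    have hMc : ((M' : ℤ) : ℤ_[p]) = (N:ℤ_[p])
        - (((a:ℤ):ℤ_[p])*((x₂:ℤ):ℤ_[p])^2 + ((1-a : ℤ):ℤ_[p])*((x₂:ℤ):ℤ_[p]))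
        - (((a:ℤ):ℤ_[p])*((x₃:ℤ):ℤ_[p])^2 + ((1-a : ℤ):ℤ_[p])*((x₃:ℤ):ℤ_[p]))
        - (((a:ℤ):ℤ_[p])*((x₄:ℤ):ℤ_[p])^2 + ((1-a : ℤ):ℤ_[p])*((x₄:ℤ):ℤ_[p])) := by
      rw [hM']; push_cast; ring
    have hcast : ((2*(2*b+1)+2 : ℤ) : ℤ_[p]) - 2 = 2*((a:ℤ):ℤ_[p]) := by
      rw [ha]; push_cast; ring
    have hone : ((1 - a : ℤ) : ℤ_[p]) = 1 - ((a:ℤ):ℤ_[p]) := by push_cast; ring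
    rw [hcast]
    rw [hMc, hone] at hzeq
    linear_combination (-2:ℤ_[p]) * hzeq

lemma sqmod (z : ℤ) : (z % 2 = 0 ∧ z^2 % 4 = 0) ∨ (z % 2 = 1 ∧ z^2 % 8 = 1) := by
  rcases Int.even_or_odd z with h | h
  · left
    obtain ⟨k, rfl⟩ := h
    constructor
    · omega
    · have : (k+k)^2 = 4*k^2 := by ring
      omega
  · right
    obtain ⟨k, rfl⟩ := h
    constructor
    · omega
    · obtain ⟨j, hj⟩ := Int.even_mul_succ_self k
      have : (2*k+1)^2 = 4*(k*(k+1)) + 1 := by ring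
      omega

lemma pairBound (a c zo ze : ℤ) (ha5 : 5 ≤ a) (ho : zo % 2 = 1) (he : ze % 2 = 0)
    (h1 : a ∣ zo - c ∨ a ∣ zo + c) (h2 : a ∣ ze - c ∨ a ∣ ze + c) :
    a^2 ≤ 2*(zo^2 + ze^2) := by
  have key : ∀ t : ℤ, a ∣ t → t % 2 = 1 → a^2 ≤ t^2 := by
    intro t hdvd hodd
    have htne : t ≠ 0 := by omega
    have habs : a ≤ |t| := Int.le_of_dvd (abs_pos.2 htne) ((dvd_abs a t).2 hdvd)
    nlinarith [sq_abs t, abs_nonneg t]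
  have hsum : (zo - ze)^2 + (zo + ze)^2 = 2*(zo^2 + ze^2) := by ring
  rcases h1 with h1 | h1 <;> rcases h2 with h2 | h2
  · have hd : a ∣ zo - ze := by
      have := dvd_sub h1 h2; simpa using (by rw [show zo - c - (ze - c) = zo - ze by ring] at this; exact this)
    have := key _ hd (by omega)
    nlinarith [sq_nonneg (zo + ze)]
  · have hd : a ∣ zo + ze := by
      have := dvd_add h1 h2
      rw [show zo - c + (ze + c) = zo + ze by ring] at this; exact this
    have := key _ hd (by omega)
    nlinarith [sq_nonneg (zo - ze)]
  · have hd : a ∣ zo + ze := by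
      have := dvd_add h1 h2
      rw [show zo + c + (ze - c) = zo + ze by ring] at this; exact this
    have := key _ hd (by omega)
    nlinarith [sq_nonneg (zo - ze)]
  · have hd : a ∣ zo - ze := by
      have := dvd_sub h1 h2
      rw [show zo + c - (ze + c) = zo - ze by ring] at this; exact this
    have := key _ hd (by omega)
    nlinarith [sq_nonneg (zo + ze)]

lemma dvd2cancel (a x : ℤ) (ha : a % 2 = 1) (h : a ∣ 2*x) : a ∣ x := by
  obtain ⟨k, hk⟩ : ∃ k, a = 2*k+1 := ⟨(a-1)/2, by omega⟩
  have h1 : a ∣ a * x := Dvd.intro x rfl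
  have h2 : a ∣ k * (2*x) := Dvd.dvd.mul_left h k
  have : x = a * x - k * (2*x) := by rw [hk]; ring
  rw [this]
  exact dvd_sub h1 h2

lemma noRep (a : ℤ) (ha : a % 2 = 1) (ha5 : 5 ≤ a) :
    ∀ (j : ℕ) (d c : ℤ) (z0 z1 z2 z3 : ℤ), d % 2 = 1 → ¬ a ∣ c →
    (a ∣ z0 - c ∨ a ∣ z0 + c) → (a ∣ z1 - c ∨ a ∣ z1 + c) →
    (a ∣ z2 - c ∨ a ∣ z2 + c) → (a ∣ z3 - c ∨ a ∣ z3 + c) →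
    z0^2 + z1^2 + z2^2 + z3^2 = 2^(2*j+1) * d → a^2 ≤ 2*d := by
  intro j
  induction j with
  | zero =>
    intro d c z0 z1 z2 z3 hd hc h0 h1 h2 h3 hsum
    rw [show 2^(2*0+1) * d = 2*d by ring] at hsum
    rcases sqmod z0 with ⟨p0,q0⟩|⟨p0,q0⟩ <;>
      rcases sqmod z1 with ⟨p1,q1⟩|⟨p1,q1⟩ <;>
        rcases sqmod z2 with ⟨p2,q2⟩|⟨p2,q2⟩ <;>
          rcases sqmod z3 with ⟨p3,q3⟩|⟨p3,q3⟩ <;>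
    first
      | (exfalso; omega)
      | (have hA := pairBound a c z2 z0 ha5 (by omega) (by omega) h2 h0
         have hB := pairBound a c z3 z1 ha5 (by omega) (by omega) h3 h1
         linarith)
      | (have hA := pairBound a c z1 z0 ha5 (by omega) (by omega) h1 h0
         have hB := pairBound a c z3 z2 ha5 (by omega) (by omega) h3 h2
         linarith)
      | (have hA := pairBound a c z1 z0 ha5 (by omega) (by omega) h1 h0
         have hB := pairBound a c z2 z3 ha5 (by omega) (by omega) h2 h3
         linarith)
      | (have hA := pairBound a c z0 z1 ha5 (by omega) (by omega) h0 h1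
         have hB := pairBound a c z3 z2 ha5 (by omega) (by omega) h3 h2
         linarith)
      | (have hA := pairBound a c z0 z1 ha5 (by omega) (by omega) h0 h1
         have hB := pairBound a c z2 z3 ha5 (by omega) (by omega) h2 h3
         linarith)
      | (have hA := pairBound a c z0 z2 ha5 (by omega) (by omega) h0 h2
         have hB := pairBound a c z1 z3 ha5 (by omega) (by omega) h1 h3
         linarith)
  | succ n ih =>
    intro d c z0 z1 z2 z3 hd hc h0 h1 h2 h3 hsum
    have h8 : (8:ℤ) ∣ z0^2 + z1^2 + z2^2 + z3^2 := by
      rw [hsum]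
      exact ⟨2^(2*n) * d, by ring⟩
    have hev : z0 % 2 = 0 ∧ z1 % 2 = 0 ∧ z2 % 2 = 0 ∧ z3 % 2 = 0 := by
      rcases sqmod z0 with ⟨p0,q0⟩|⟨p0,q0⟩ <;>
        rcases sqmod z1 with ⟨p1,q1⟩|⟨p1,q1⟩ <;>
          rcases sqmod z2 with ⟨p2,q2⟩|⟨p2,q2⟩ <;>
            rcases sqmod z3 with ⟨p3,q3⟩|⟨p3,q3⟩ <;>
              omega
    obtain ⟨he0, he1, he2, he3⟩ := hev
    obtain ⟨w0, hw0⟩ : ∃ w, z0 = 2*w := ⟨z0/2, by omega⟩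
    obtain ⟨w1, hw1⟩ : ∃ w, z1 = 2*w := ⟨z1/2, by omega⟩
    obtain ⟨w2, hw2⟩ : ∃ w, z2 = 2*w := ⟨z2/2, by omega⟩
    obtain ⟨w3, hw3⟩ : ∃ w, z3 = 2*w := ⟨z3/2, by omega⟩
    obtain ⟨a2, ha2⟩ : ∃ k, a = 2*k+1 := ⟨(a-1)/2, by omega⟩
    set c' : ℤ := (a2+1)*c with hc'
    have h2c' : 2*c' - c = a*c := by rw [hc', ha2]; ring
    have hcnd : ¬ a ∣ c' := by
      intro hdvd
      apply hc
      have h2 : a ∣ 2*c' := Dvd.dvd.mul_left hdvd 2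
      have : c = 2*c' - a*c := by omega
      rw [this]
      exact dvd_sub h2 (Dvd.intro c rfl)
    have step : ∀ zz ww : ℤ, zz = 2*ww → (a ∣ zz - c ∨ a ∣ zz + c) →
        (a ∣ ww - c' ∨ a ∣ ww + c') := by
      intro zz ww hzw hcl
      rcases hcl with hcl | hcl
      · left
        apply dvd2cancel a _ ha
        have : 2*(ww - c') = (zz - c) - a*c := by rw [hzw]; omega
        rw [this]
        exact dvd_sub hcl (Dvd.intro c rfl)
      · right
        apply dvd2cancel a _ ha
        have : 2*(ww + c') = (zz + c) + a*c := by rw [hzw]; omega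
        rw [this]
        exact dvd_add hcl (Dvd.intro c rfl)
    have hsum' : w0^2 + w1^2 + w2^2 + w3^2 = 2^(2*n+1) * d := by
      have hexp : (4:ℤ) * (2^(2*n+1) * d) = 2^(2*(n+1)+1) * d := by ring
      have : (4:ℤ) * (w0^2 + w1^2 + w2^2 + w3^2) = 4 * (2^(2*n+1) * d) := by
        rw [hexp, ← hsum, hw0, hw1, hw2, hw3]; ring
      linarith
    exact ih d c' w0 w1 w2 w3 hd hcnd (step _ _ hw0 h0) (step _ _ hw1 h1)
      (step _ _ hw2 h2) (step _ _ hw3 h3) hsum'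

lemma polyPeq (b w : ℤ) : polyP (2*(2*b+1)+2) w = (2*b+1)*(w^2-w) + w := by
  unfold polyP
  rw [show (2*(2*b+1)+2 - 2) * (w^2-w) = 2*((2*b+1)*(w^2-w)) by ring]
  rw [Int.mul_ediv_cancel_left _ two_ne_zero]

lemma powCong (a : ℤ) (e : ℕ) : a ∣ (1-a)^e - 1 := by
  have h : (1 : ℤ) ≡ (1-a) [ZMOD a] := Int.modEq_iff_dvd.mpr ⟨-1, by ring⟩
  have h2 := Int.modEq_iff_dvd.mp (h.pow e)
  simpa using h2

lemma exceptBig (b T : ℤ) (hb : 2 ≤ b) (hT : 0 ≤ T) :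
    ∃ N : ℤ, T < N ∧ 0 < N ∧
      ¬ ∃ x : Fin 4 → ℤ, ∑ i, polyP (2*(2*b+1)+2) (x i) = N := by
  set a : ℤ := 2*b+1 with ha
  have ha5 : 5 ≤ a := by omega
  have haodd : a % 2 = 1 := by omega
  -- choose n
  set R : ℤ := a*T + 4*b^2 with hR
  have hRpos : 0 ≤ R := by positivity
  obtain ⟨n, hn⟩ : ∃ n : ℕ, R < 2^(2*n+1) := by
    refine ⟨R.toNat, ?_⟩
    have h1 : R.toNat < 2^R.toNat := Nat.lt_two_pow_self
    have h2 : (2:ℤ)^R.toNat ≤ 2^(2*R.toNat+1) := pow_le_pow_right₀ (by norm_num) (by omega)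
    have h3 : (R.toNat : ℤ) < 2^R.toNat := by exact_mod_cast h1
    calc R = (R.toNat:ℤ) := (Int.toNat_of_nonneg hRpos).symm
    _ < 2^R.toNat := h3
    _ ≤ 2^(2*R.toNat+1) := h2
  set e : ℕ := 2*n+1 with he
  -- solve 2^e * y ≡ 4b^2 mod a
  obtain ⟨a2, ha2⟩ : ∃ k, a = 2*k+1 := ⟨b, by omega⟩
  have hy : a ∣ 2^e * (4*b^2*(-a2)^e) - 4*b^2 := by
    have h1 : 2^e * (4*b^2*(-a2)^e) - 4*b^2 = 4*b^2 * ((1-a)^e - 1) := by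
      rw [ha2]
      rw [show ((1:ℤ) - (2*a2+1)) = 2*(-a2) by ring, mul_pow]
      ring
    rw [h1]
    exact Dvd.dvd.mul_left (powCong a e) _
  set y : ℤ := 4*b^2*(-a2)^e with hydef
  set t : ℤ := y % a with ht
  have hapos : (0:ℤ) < a := by omega
  have ht0 : 0 ≤ t := Int.emod_nonneg y (by omega)
  have ht1 : t < a := Int.emod_lt_of_pos y hapos
  have hyt : a ∣ y - t := by
    rw [ht]
    exact ⟨y / a, by rw [Int.emod_def]; ring⟩
  set d : ℤ := if t % 2 = 1 then t else t + a with hd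
  have hdodd : d % 2 = 1 := by
    rw [hd]; split <;> omega
  have hd1 : 1 ≤ d := by rw [hd]; split <;> omega
  have hd2 : d ≤ 2*a - 1 := by rw [hd]; split <;> omega
  have hdt : a ∣ d - t := by
    rw [hd]; split
    · simp
    · exact ⟨1, by ring⟩
  have hdvd : a ∣ 2^e * d - 4*b^2 := by
    have h1 : 2^e * d - 4*b^2 = (2^e * y - 4*b^2) + 2^e * ((d - t) + (t - y)) := by ring
    rw [h1]
    refine dvd_add hy (Dvd.dvd.mul_left (dvd_add hdt ?_) _)
    rw [show t - y = -(y - t) by ring]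
    exact dvd_neg.mpr hyt
  set N : ℤ := (2^e * d - 4*b^2) / a with hN
  have haN : a * N = 2^e * d - 4*b^2 := Int.mul_ediv_cancel' hdvd
  have hpow : (0:ℤ) < 2^e := by positivity
  have hNT : T < N := by
    have h1 : a * T < a * N := by
      have : (2:ℤ)^e * 1 ≤ 2^e * d := by
        apply mul_le_mul_of_nonneg_left (by omega) (le_of_lt hpow)
      nlinarith
    exact lt_of_mul_lt_mul_left h1 (by omega)
  refine ⟨N, hNT, by omega, ?_⟩
  rintro ⟨x, hx⟩
  rw [Fin.sum_univ_four] at hx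
  rw [polyPeq, polyPeq, polyPeq, polyPeq] at hx
  have hsum : (a*(x 0) - b)^2 + (a*(x 1) - b)^2 + (a*(x 2) - b)^2 + (a*(x 3) - b)^2
      = 2^(2*n+1) * d := by
    rw [← he]
    linear_combination a * hx + haN
  have hnb : ¬ a ∣ b := by
    intro hdvdb
    have := Int.le_of_dvd (by omega) hdvdb
    omega
  have hcl : ∀ i : Fin 4, a ∣ (a*(x i) - b) - b ∨ a ∣ (a*(x i) - b) + b := by
    intro i
    right
    exact ⟨x i, by ring⟩
  have hfin := noRep a haodd ha5 n d b _ _ _ _ hdodd hnb (hcl 0) (hcl 1) (hcl 2) (hcl 3) hsum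
  nlinarith


/-- For `m ≡ 0 (mod 4)` with `m > 8`, the form `P_m(x₁)+P_m(x₂)+P_m(x₃)+P_m(x₄)`
is locally universal (every positive integer is represented over every `ℤ_[p]`,
stated via the doubled equation) but not almost universal: infinitely many
positive integers are not represented over `ℤ`. -/
theorem four_ones_locally_universal_not_almost_universal (m : ℤ)
    (hm4 : 4 ∣ m) (hm : 8 < m) :
    (∀ N : ℤ, 0 < N → ∀ (p : ℕ) (_ : Fact p.Prime),
      ∃ x : Fin 4 → ℤ_[p],
        2 * (N : ℤ_[p]) =
          ∑ i, (((m : ℤ_[p]) - 2) * ((x i) ^ 2 - x i) + 2 * x i)) ∧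
    {N : ℤ | 0 < N ∧ ¬ ∃ x : Fin 4 → ℤ, ∑ i, polyP m (x i) = N}.Infinite := by
  obtain ⟨q, rfl⟩ := hm4
  have hq : 3 ≤ q := by omega
  set b : ℤ := q - 1 with hbdef
  have hb : 2 ≤ b := by omega
  have hmeq : (4*q : ℤ) = 2*(2*b+1)+2 := by omega
  constructor
  · intro N hN p hp
    have hloc := localUniv b hb N hN p
    rw [show ((4 * q : ℤ) : ℤ_[p]) = ((2*(2*b+1)+2 : ℤ) : ℤ_[p]) from by rw [← hmeq]]
    exact hloc
  · by_contra hfin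
    rw [Set.not_infinite] at hfin
    obtain ⟨ub, hub⟩ := hfin.bddAbove
    obtain ⟨N, hNT, hN0, hNrep⟩ := exceptBig b (max ub 0) hb (le_max_right _ _)
    rw [← hmeq] at hNrep
    have hmem : N ∈ {N : ℤ | 0 < N ∧ ¬ ∃ x : Fin 4 → ℤ, ∑ i, polyP (4*q) (x i) = N} :=
      ⟨hN0, hNrep⟩
    have hle := hub hmem
    have := le_max_left ub (0:ℤ)
    omega
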